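/- For n ≥ 1, σ₀ − σ₁ = (1/2^{n−1}) ⨂_l (P(0) − P(1)), i.e. the difference of the two parity-conditioned ensemble states equals (1/2^{n−1}) times the n-fold tensor power of |0⟩⟨0| − |+⟩⟨+| = !![1/2, −1/2; −1/2, −1/2]. -/

import Mathlib

open Matrix Finset

/-- Hamming weight of a bit string. -/
def hammingW {n : ℕ} (ν : Fin n → ZMod 2) : ℕ :=
  (Finset.univ.filter fun l => ν l = 1).card

/-- Parity of a bit string. -/
def parity {n : ℕ} (ν : Fin n → ZMod 2) : ZMod 2 := ∑ l, ν l

/-- Tensor product of a family of one-qubit matrices, as a matrix indexed by bit strings. -/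
def tens {n : ℕ} (A : Fin n → Matrix (ZMod 2) (ZMod 2) ℂ) :
    Matrix (Fin n → ZMod 2) (Fin n → ZMod 2) ℂ :=
  Matrix.of fun x y => ∏ l, A l (x l) (y l)

/-- `P 0 = |0⟩⟨0|`, `P 1 = |+⟩⟨+|`. -/
noncomputable def projP (b : ZMod 2) : Matrix (ZMod 2) (ZMod 2) ℂ :=
  if b = 0 then !![1, 0; 0, 0] else (1 / 2 : ℂ) • !![1, 1; 1, 1]

/-- The parity-conditioned ensemble state `σ_b`. -/
noncomputable def sigma (n : ℕ) (b : ZMod 2) :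
    Matrix (Fin n → ZMod 2) (Fin n → ZMod 2) ℂ :=
  (1 / 2 ^ (n - 1) : ℂ) •
    ∑ j ∈ Finset.univ.filter (fun j : Fin n → ZMod 2 => parity j = b),
      tens (fun l => projP (j l))

lemma zmod2_cases (a : ZMod 2) : a = 0 ∨ a = 1 := by
  revert a; decide

lemma parity_eq_cast {n : ℕ} (j : Fin n → ZMod 2) :
    parity j = (hammingW j : ZMod 2) := by
  unfold parity hammingW
  rw [Finset.card_filter, Nat.cast_sum]
  apply Finset.sum_congr rfl
  intro l _
  rcases zmod2_cases (j l) with h | h <;> simp [h]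

lemma sign_prod {n : ℕ} (j : Fin n → ZMod 2) :
    (∏ l, (if j l = 0 then (1 : ℂ) else -1)) =
      (if parity j = 0 then (1 : ℂ) else -1) := by
  have h1 : (∏ l, (if j l = 0 then (1 : ℂ) else -1)) = (-1) ^ hammingW j := by
    rw [← Finset.prod_filter_mul_prod_filter_not Finset.univ (fun l => j l = 1)]
    rw [Finset.prod_congr rfl (fun l hl => ?_) (g := fun _ => (-1 : ℂ))]
    · rw [Finset.prod_const, Finset.prod_congr rfl (fun l hl => ?_) (g := fun _ => (1 : ℂ))]
      · simp [hammingW]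
      · simp only [Finset.mem_filter] at hl
        rcases zmod2_cases (j l) with h | h
        · simp [h]
        · exact absurd h hl.2
    · simp only [Finset.mem_filter] at hl
      rw [hl.2]; norm_num
  rw [h1, parity_eq_cast]
  rcases Nat.even_or_odd (hammingW j) with h | h
  · rw [h.neg_one_pow, if_pos]
    exact (ZMod.natCast_eq_zero_iff _ 2).2 h.two_dvd
  · rw [h.neg_one_pow, if_neg]
    intro hc
    exact (Nat.not_even_iff_odd.2 h) (even_iff_two_dvd.2 ((ZMod.natCast_eq_zero_iff _ 2).1 hc))

theorem sigma_sub_sigma (n : ℕ) (hn : 1 ≤ n) :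
    sigma n 0 - sigma n 1 = (1 / 2 ^ (n - 1) : ℂ) • tens (fun _ => projP 0 - projP 1) := by
  ext x y
  simp only [sigma, tens, Matrix.sub_apply, Matrix.smul_apply, Matrix.of_apply,
    Matrix.sum_apply, smul_eq_mul]
  rw [← mul_sub]
  congr 1
  have expand : (∏ l, (projP 0 (x l) (y l) - projP 1 (x l) (y l)))
      = ∑ j : Fin n → ZMod 2, ∏ l,
          (if j l = 0 then projP 0 (x l) (y l) else - projP 1 (x l) (y l)) := by
    have h1 : (∏ l, (projP 0 (x l) (y l) - projP 1 (x l) (y l)))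
        = ∏ l, ∑ b : ZMod 2, (if b = 0 then projP 0 (x l) (y l) else - projP 1 (x l) (y l)) := by
      apply Finset.prod_congr rfl
      intro l _
      have huniv : (Finset.univ : Finset (ZMod 2)) = {0, 1} := by decide
      rw [huniv, Finset.sum_insert (by decide), Finset.sum_singleton]
      norm_num [sub_eq_add_neg]
    rw [h1, Finset.prod_univ_sum]
    rfl
  rw [expand]
  have step : ∀ j : Fin n → ZMod 2,
      (∏ l, (if j l = 0 then projP 0 (x l) (y l) else - projP 1 (x l) (y l)))
        = (if parity j = 0 then (1:ℂ) else -1) * ∏ l, projP (j l) (x l) (y l) := by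
    intro j
    rw [← sign_prod j, ← Finset.prod_mul_distrib]
    apply Finset.prod_congr rfl
    intro l _
    rcases zmod2_cases (j l) with h | h <;> simp [h]
  have hfilter : Finset.univ.filter (fun j : Fin n → ZMod 2 => ¬ parity j = 0)
      = Finset.univ.filter (fun j => parity j = 1) := by
    apply Finset.filter_congr
    intro j _
    rcases zmod2_cases (parity j) with h | h <;> simp [h]
  set p : (Fin n → ZMod 2) → ℂ := fun j => ∏ l, projP (j l) (x l) (y l) with hp
  have h10 : ((1 : ZMod 2) ≠ 0) := by decide
  calc (∑ j ∈ Finset.univ.filter (fun j : Fin n → ZMod 2 => parity j = 0), p j)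
        - ∑ j ∈ Finset.univ.filter (fun j : Fin n → ZMod 2 => parity j = 1), p j
      = (∑ j ∈ Finset.univ.filter (fun j : Fin n → ZMod 2 => parity j = 0),
            (if parity j = 0 then (1:ℂ) else -1) * p j)
        + ∑ j ∈ Finset.univ.filter (fun j : Fin n → ZMod 2 => ¬ parity j = 0),
            (if parity j = 0 then (1:ℂ) else -1) * p j := by
        rw [hfilter]
        have e0 : ∑ j ∈ Finset.univ.filter (fun j : Fin n → ZMod 2 => parity j = 0),
            (if parity j = 0 then (1:ℂ) else -1) * p j
            = ∑ j ∈ Finset.univ.filter (fun j : Fin n → ZMod 2 => parity j = 0), p j :=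
          Finset.sum_congr rfl fun j hj => by
            rw [if_pos (Finset.mem_filter.1 hj).2, one_mul]
        have e1 : ∑ j ∈ Finset.univ.filter (fun j : Fin n → ZMod 2 => parity j = 1),
            (if parity j = 0 then (1:ℂ) else -1) * p j
            = -∑ j ∈ Finset.univ.filter (fun j : Fin n → ZMod 2 => parity j = 1), p j := by
          rw [← Finset.sum_neg_distrib]
          exact Finset.sum_congr rfl fun j hj => by
            rw [if_neg ((Finset.mem_filter.1 hj).2 ▸ h10), neg_one_mul]
        rw [e0, e1]
        ring
    _ = ∑ j : Fin n → ZMod 2, (if parity j = 0 then (1:ℂ) else -1) * p j :=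
        Finset.sum_filter_add_sum_filter_not _ _ _
    _ = ∑ j : Fin n → ZMod 2, ∏ l,
          (if j l = 0 then projP 0 (x l) (y l) else - projP 1 (x l) (y l)) :=
        Finset.sum_congr rfl (fun j _ => (step j).symm)
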